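/- arXiv:2203.09226 — 2 statements merged into one kernel-verified Lean document; each statement's English description precedes it below -/
import Mathlib

section
/- Let 0 < M < N, let Φ ∈ ℝ^{N×M} have orthonormal columns (ΦᵀΦ = I_M), and let P ∈ ℝ^{N×M} be a selection matrix whose columns are M distinct standard basis vectors of ℝ^N, such that PᵀΦ is invertible. Then for every x ∈ ℝ^N, the DEIM approximation error satisfies ‖x − Φ (PᵀΦ)⁻¹ Pᵀ x‖₂ ≤ ‖(PᵀΦ)⁻¹‖₂ · ‖x − Φ Φᵀ x‖₂. -/
open Matrix
open scoped Matrix.Norms.L2Operator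

/-- Multiplication of a real matrix with a Euclidean vector, valued in Euclidean space
(so that `‖·‖` is the Euclidean 2-norm). -/
noncomputable def mulVecE {m n : ℕ} (A : Matrix (Fin m) (Fin n) ℝ)
    (x : EuclideanSpace ℝ (Fin n)) : EuclideanSpace ℝ (Fin m) :=
  Matrix.toEuclideanLin A x

/-- `P : ℝ^{N×M}` is a selection matrix: its `M` columns are distinct standard basis
vectors of `ℝ^N`. -/
def IsSelectionMatrix {N M : ℕ} (P : Matrix (Fin N) (Fin M) ℝ) : Prop :=
  ∃ g : Fin M → Fin N, Function.Injective g ∧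
    ∀ i j, P i j = if i = g j then (1 : ℝ) else 0

lemma mulVecE_mul {m n k : ℕ} (A : Matrix (Fin m) (Fin n) ℝ) (B : Matrix (Fin n) (Fin k) ℝ)
    (x : EuclideanSpace ℝ (Fin k)) : mulVecE (A * B) x = mulVecE A (mulVecE B x) := by
  simp [mulVecE, Matrix.toEuclideanLin_apply, Matrix.mulVec_mulVec]

lemma mulVecE_one {n : ℕ} (x : EuclideanSpace ℝ (Fin n)) : mulVecE 1 x = x := by
  simp [mulVecE, Matrix.toEuclideanLin_apply]

lemma mulVecE_sub {m n : ℕ} (A : Matrix (Fin m) (Fin n) ℝ) (x y : EuclideanSpace ℝ (Fin n)) :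
    mulVecE A (x - y) = mulVecE A x - mulVecE A y := by
  simp [mulVecE]

lemma mulVecE_add {m n : ℕ} (A : Matrix (Fin m) (Fin n) ℝ) (x y : EuclideanSpace ℝ (Fin n)) :
    mulVecE A (x + y) = mulVecE A x + mulVecE A y := by
  simp [mulVecE]

lemma mulVecE_smul {m n : ℕ} (A : Matrix (Fin m) (Fin n) ℝ) (c : ℝ)
    (x : EuclideanSpace ℝ (Fin n)) : mulVecE A (c • x) = c • mulVecE A x := by
  simp [mulVecE]

lemma norm_mulVecE_le {m n : ℕ} (A : Matrix (Fin m) (Fin n) ℝ) (x : EuclideanSpace ℝ (Fin n)) :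
    ‖mulVecE A x‖ ≤ ‖A‖ * ‖x‖ :=
  A.l2_opNorm_mulVec x

lemma inner_mulVecE {m n : ℕ} (A : Matrix (Fin m) (Fin n) ℝ) (v : EuclideanSpace ℝ (Fin n))
    (w : EuclideanSpace ℝ (Fin m)) :
    inner ℝ (mulVecE A v) w = (inner ℝ v (mulVecE Aᵀ w) : ℝ) := by
  simp only [mulVecE, Matrix.toEuclideanLin_apply, PiLp.inner_apply, RCLike.inner_apply,
    starRingEnd_apply, star_trivial, WithLp.ofLp_toLp]
  simp [Matrix.mulVec, dotProduct, Finset.mul_sum, Finset.sum_mul]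
  rw [Finset.sum_comm]
  congr 1; ext i; congr 1; ext j; ring

lemma norm_sq_eq_sum' {n : ℕ} (v : EuclideanSpace ℝ (Fin n)) :
    ‖v‖ ^ 2 = ∑ i, v i * v i := by
  rw [← real_inner_self_eq_norm_sq]
  simp only [PiLp.inner_apply, RCLike.inner_apply, conj_trivial]

lemma selection_norm_sq_le {N M : ℕ} (P : Matrix (Fin N) (Fin M) ℝ)
    (hP : IsSelectionMatrix P) (y : EuclideanSpace ℝ (Fin N)) :
    ‖mulVecE Pᵀ y‖ ^ 2 ≤ ‖y‖ ^ 2 := by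
  obtain ⟨g, hg, hPg⟩ := hP
  rw [norm_sq_eq_sum', norm_sq_eq_sum']
  have hentry : ∀ j, (mulVecE Pᵀ y) j = y (g j) := by
    intro j
    simp only [mulVecE, Matrix.toEuclideanLin_apply, WithLp.ofLp_toLp]
    simp [Matrix.mulVec, dotProduct, Matrix.transpose_apply, hPg]
  simp only [hentry]
  calc ∑ j, y (g j) * y (g j) = ∑ i ∈ Finset.univ.image g, y i * y i := by
        rw [Finset.sum_image (fun a _ b _ h => hg h)]
    _ ≤ ∑ i, y i * y i :=
        Finset.sum_le_sum_of_subset_of_nonneg (Finset.subset_univ _)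
          (fun i _ _ => mul_self_nonneg _)

/-- DEIM approximation error bound: for `0 < M < N`, `Φ` with orthonormal columns and a
selection matrix `P` with `PᵀΦ` invertible, every `x ∈ ℝ^N` satisfies
`‖x − Φ(PᵀΦ)⁻¹Pᵀx‖₂ ≤ ‖(PᵀΦ)⁻¹‖₂ ‖x − ΦΦᵀx‖₂`. -/
theorem stmt2 {N M : ℕ} (hM : 0 < M) (hMN : M < N)
    (Φ P : Matrix (Fin N) (Fin M) ℝ)
    (hΦ : Φᵀ * Φ = 1)
    (hP : IsSelectionMatrix P)
    (hinv : IsUnit (Pᵀ * Φ)) :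
    ∀ x : EuclideanSpace ℝ (Fin N),
      ‖x - mulVecE (Φ * (Pᵀ * Φ)⁻¹ * Pᵀ) x‖ ≤
        ‖(Pᵀ * Φ)⁻¹‖ * ‖x - mulVecE (Φ * Φᵀ) x‖ := by
  intro x
  have hdet : IsUnit (Pᵀ * Φ).det := (Matrix.isUnit_iff_isUnit_det _).mp hinv
  have hAinv : (Pᵀ * Φ)⁻¹ * (Pᵀ * Φ) = 1 := Matrix.nonsing_inv_mul _ hdet
  set c : ℝ := ‖(Pᵀ * Φ)⁻¹‖ with hc
  have hc0 : 0 ≤ c := norm_nonneg _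
  set p : EuclideanSpace ℝ (Fin N) := mulVecE (Φ * Φᵀ) x with hp
  set r : EuclideanSpace ℝ (Fin N) := x - p with hr
  set b : EuclideanSpace ℝ (Fin M) := mulVecE ((Pᵀ * Φ)⁻¹ * Pᵀ) r with hb
  clear_value c p r b
  -- Φᵀ r = 0
  have hmm : Φᵀ * (Φ * Φᵀ) = Φᵀ := by rw [← Matrix.mul_assoc, hΦ, Matrix.one_mul]
  have F1 : mulVecE Φᵀ r = 0 := by
    rw [hr, mulVecE_sub, hp, ← mulVecE_mul, hmm, sub_self]
  -- isometry
  have F4 : ∀ v : EuclideanSpace ℝ (Fin M), ‖mulVecE Φ v‖ ^ 2 = ‖v‖ ^ 2 := by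
    intro v
    rw [← real_inner_self_eq_norm_sq, inner_mulVecE, ← mulVecE_mul, hΦ, mulVecE_one,
      real_inner_self_eq_norm_sq]
  -- orthogonality
  have F3 : ∀ v : EuclideanSpace ℝ (Fin M), (inner ℝ (mulVecE Φ v) r : ℝ) = 0 := by
    intro v; rw [inner_mulVecE, F1, inner_zero_right]
  -- error identity
  have key : (Pᵀ * Φ)⁻¹ * Pᵀ * (Φ * Φᵀ) = Φᵀ := by
    rw [Matrix.mul_assoc, ← Matrix.mul_assoc Pᵀ Φ Φᵀ, ← Matrix.mul_assoc, hAinv, Matrix.one_mul]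
  have F2 : x - mulVecE (Φ * (Pᵀ * Φ)⁻¹ * Pᵀ) x = r - mulVecE Φ b := by
    have hx : x = p + r := by rw [hr]; abel
    have h1 : mulVecE (Φ * (Pᵀ * Φ)⁻¹ * Pᵀ) x
        = mulVecE Φ (mulVecE ((Pᵀ * Φ)⁻¹ * Pᵀ) x) := by
      rw [Matrix.mul_assoc, mulVecE_mul]
    have h2 : mulVecE ((Pᵀ * Φ)⁻¹ * Pᵀ) p = mulVecE Φᵀ x := by
      rw [hp, ← mulVecE_mul, key]
    have h3 : mulVecE Φ (mulVecE Φᵀ x) = p := by rw [← mulVecE_mul, hp]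
    calc x - mulVecE (Φ * (Pᵀ * Φ)⁻¹ * Pᵀ) x
        = x - mulVecE Φ (mulVecE ((Pᵀ * Φ)⁻¹ * Pᵀ) (p + r)) := by rw [h1, ← hx]
      _ = x - (p + mulVecE Φ b) := by
          rw [mulVecE_add, h2, mulVecE_add, h3, hb]
      _ = r - mulVecE Φ b := by rw [hr]; abel
  -- squared norm of the error
  have F5 : ‖r - mulVecE Φ b‖ ^ 2 = ‖r‖ ^ 2 + ‖b‖ ^ 2 := by
    rw [norm_sub_sq_real, real_inner_comm, F3, F4]; ring
  -- 1 ≤ c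
  have F7 : 1 ≤ c := by
    set e : EuclideanSpace ℝ (Fin M) := EuclideanSpace.single ⟨0, hM⟩ (1 : ℝ) with he
    clear_value e
    have hne : ‖e‖ = 1 := by rw [he, EuclideanSpace.norm_single, norm_one]
    have h1 : mulVecE ((Pᵀ * Φ)⁻¹ * (Pᵀ * Φ)) e = e := by rw [hAinv, mulVecE_one]
    have h2 : ‖e‖ ≤ c * ‖mulVecE (Pᵀ * Φ) e‖ := by
      calc ‖e‖ = ‖mulVecE (Pᵀ * Φ)⁻¹ (mulVecE (Pᵀ * Φ) e)‖ := by rw [← mulVecE_mul, h1]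
        _ ≤ c * ‖mulVecE (Pᵀ * Φ) e‖ := by rw [hc]; exact norm_mulVecE_le _ _
    have h3 : ‖mulVecE (Pᵀ * Φ) e‖ ^ 2 ≤ 1 := by
      have := selection_norm_sq_le P hP (mulVecE Φ e)
      rw [F4, hne] at this
      rw [mulVecE_mul]; simpa using this
    nlinarith [norm_nonneg (mulVecE (Pᵀ * Φ) e), hne, h2, h3]
  -- key inequality via the trick vector y
  have F6 : ‖r‖ ^ 2 + ‖b‖ ^ 2 ≤ c ^ 2 * ‖r‖ ^ 2 := by
    by_cases hbz : ‖b‖ = 0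
    · have hcc : 1 ≤ c ^ 2 := by
        rw [sq]
        calc (1:ℝ) = 1 * 1 := by ring
          _ ≤ c * c := mul_le_mul F7 F7 zero_le_one (le_trans zero_le_one F7)
      rw [hbz]
      simpa using le_mul_of_one_le_left (sq_nonneg ‖r‖) hcc
    · have hbpos : 0 < ‖b‖ := lt_of_le_of_ne (norm_nonneg _) (Ne.symm hbz)
      set y : EuclideanSpace ℝ (Fin N) := ‖r‖ ^ 2 • mulVecE Φ b + ‖b‖ ^ 2 • r with hy
      clear_value y
      have h61 : mulVecE ((Pᵀ * Φ)⁻¹ * Pᵀ) (mulVecE Φ b) = b := by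
        rw [← mulVecE_mul, Matrix.mul_assoc, hAinv, mulVecE_one]
      have h62 : mulVecE ((Pᵀ * Φ)⁻¹ * Pᵀ) y = (‖r‖ ^ 2 + ‖b‖ ^ 2) • b := by
        rw [hy, mulVecE_add, mulVecE_smul, mulVecE_smul, h61, ← hb, add_smul]
      have hynorm : ‖y‖ ^ 2 = ‖r‖ ^ 2 * ‖r‖ ^ 2 * ‖b‖ ^ 2 + ‖b‖ ^ 2 * ‖b‖ ^ 2 * ‖r‖ ^ 2 := by
        rw [hy, norm_add_sq_real, real_inner_smul_left, real_inner_smul_right, F3,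
          norm_smul, norm_smul]
        rw [mul_pow, mul_pow, F4]
        simp [abs_of_nonneg (sq_nonneg ‖r‖), abs_of_nonneg (sq_nonneg ‖b‖)]
        ring
      have hchain : (‖r‖ ^ 2 + ‖b‖ ^ 2) * ‖b‖ ≤ c * ‖mulVecE Pᵀ y‖ := by
        have := norm_mulVecE_le (Pᵀ * Φ)⁻¹ (mulVecE Pᵀ y)
        rw [← mulVecE_mul, h62, norm_smul, ← hc] at this
        calc (‖r‖ ^ 2 + ‖b‖ ^ 2) * ‖b‖
            = ‖(‖r‖ ^ 2 + ‖b‖ ^ 2 : ℝ)‖ * ‖b‖ := by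
              rw [Real.norm_eq_abs, abs_of_nonneg (by positivity)]
          _ ≤ c * ‖mulVecE Pᵀ y‖ := this
      have hPy : ‖mulVecE Pᵀ y‖ ^ 2 ≤ ‖y‖ ^ 2 := selection_norm_sq_le P hP y
      have hsq : ((‖r‖ ^ 2 + ‖b‖ ^ 2) * ‖b‖) ^ 2 ≤ (c * ‖mulVecE Pᵀ y‖) ^ 2 := by
        exact pow_le_pow_left₀ (by positivity) hchain 2
      have hmain : ((‖r‖ ^ 2 + ‖b‖ ^ 2) * ‖b‖) ^ 2
          ≤ c ^ 2 * (‖r‖ ^ 2 * ‖r‖ ^ 2 * ‖b‖ ^ 2 + ‖b‖ ^ 2 * ‖b‖ ^ 2 * ‖r‖ ^ 2) := by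
        rw [← hynorm]
        calc ((‖r‖ ^ 2 + ‖b‖ ^ 2) * ‖b‖) ^ 2 ≤ (c * ‖mulVecE Pᵀ y‖) ^ 2 := hsq
          _ = c ^ 2 * ‖mulVecE Pᵀ y‖ ^ 2 := by ring
          _ ≤ c ^ 2 * ‖y‖ ^ 2 := mul_le_mul_of_nonneg_left hPy (sq_nonneg c)
      have hpos : 0 < ‖b‖ ^ 2 * (‖r‖ ^ 2 + ‖b‖ ^ 2) := by positivity
      have h' : (‖r‖ ^ 2 + ‖b‖ ^ 2) * (‖b‖ ^ 2 * (‖r‖ ^ 2 + ‖b‖ ^ 2))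
          ≤ c ^ 2 * ‖r‖ ^ 2 * (‖b‖ ^ 2 * (‖r‖ ^ 2 + ‖b‖ ^ 2)) := by
        calc (‖r‖ ^ 2 + ‖b‖ ^ 2) * (‖b‖ ^ 2 * (‖r‖ ^ 2 + ‖b‖ ^ 2))
            = ((‖r‖ ^ 2 + ‖b‖ ^ 2) * ‖b‖) ^ 2 := by ring
          _ ≤ c ^ 2 * (‖r‖ ^ 2 * ‖r‖ ^ 2 * ‖b‖ ^ 2 + ‖b‖ ^ 2 * ‖b‖ ^ 2 * ‖r‖ ^ 2) := hmain
          _ = c ^ 2 * ‖r‖ ^ 2 * (‖b‖ ^ 2 * (‖r‖ ^ 2 + ‖b‖ ^ 2)) := by ring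
      exact le_of_mul_le_mul_right h' hpos
  -- conclude
  rw [F2]
  have hfin : ‖r - mulVecE Φ b‖ ^ 2 ≤ (c * ‖r‖) ^ 2 := by
    rw [F5, mul_pow]; exact F6
  have := Real.sqrt_le_sqrt hfin
  rwa [Real.sqrt_sq (norm_nonneg _), Real.sqrt_sq (by positivity)] at this
end

section
/- Let A be an n×n complex matrix all of whose eigenvalues have strictly negative real part. Then there exists a constant C ≥ 0 such that ‖exp(t A)‖ ≤ C for all t ≥ 0, i.e. sup_{t ≥ 0} ‖exp(t A)‖ < ∞. -/
open Matrix
open scoped Matrix.Norms.L2Operator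

lemma aux_mulVec_exp {n : ℕ} (A : Matrix (Fin n) (Fin n) ℂ) {v : Fin n → ℂ} {l : ℂ}
    (h : A *ᵥ v = l • v) :
    NormedSpace.exp A *ᵥ v = Complex.exp l • v := by
  have hpow : ∀ k : ℕ, A ^ k *ᵥ v = l ^ k • v := by
    intro k
    induction k with
    | zero => simp
    | succ k ih =>
      rw [pow_succ, ← Matrix.mulVec_mulVec, h, Matrix.mulVec_smul, ih, smul_smul, pow_succ,
        mul_comm]
  let L : Matrix (Fin n) (Fin n) ℂ →ₗ[ℂ] (Fin n → ℂ) :=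
    { toFun := fun M => M *ᵥ v
      map_add' := fun M N => Matrix.add_mulVec _ _ _
      map_smul' := fun c M => Matrix.smul_mulVec c M v }
  let Lc : Matrix (Fin n) (Fin n) ℂ →L[ℂ] (Fin n → ℂ) := ⟨L, L.continuous_of_finiteDimensional⟩
  have hsum : Summable fun k : ℕ => ((Nat.factorial k : ℂ))⁻¹ • A ^ k := NormedSpace.expSeries_summable' A
  have hsuml : Summable fun k : ℕ => ((Nat.factorial k : ℂ))⁻¹ • l ^ k := NormedSpace.expSeries_summable' l
  have h1 : NormedSpace.exp A *ᵥ v = Lc (∑' k : ℕ, ((Nat.factorial k : ℂ))⁻¹ • A ^ k) := by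
    rw [NormedSpace.exp_eq_tsum ℂ]
    rfl
  rw [h1, Lc.map_tsum hsum]
  have h2 : ∀ k : ℕ, Lc (((Nat.factorial k : ℂ))⁻¹ • A ^ k) = (((Nat.factorial k : ℂ))⁻¹ • l ^ k) • v := by
    intro k
    show (((Nat.factorial k : ℂ))⁻¹ • A ^ k) *ᵥ v = _
    rw [Matrix.smul_mulVec, hpow, smul_smul, smul_eq_mul]
  simp_rw [h2]
  rw [hsuml.tsum_smul_const, Complex.exp_eq_exp_ℂ, NormedSpace.exp_eq_tsum ℂ]

lemma aux_spec_exp {n : ℕ} (A : Matrix (Fin n) (Fin n) ℂ) {μ : ℂ}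
    (hμ : μ ∈ spectrum ℂ (NormedSpace.exp A)) :
    ∃ l ∈ spectrum ℂ A, μ = Complex.exp l := by
  set B := NormedSpace.exp A with hB
  have hcomm : A * B = B * A := ((Commute.refl A).exp_right).eq
  -- pass to endomorphisms
  have hμ' : Module.End.HasEigenvalue (Matrix.toLinAlgEquiv' B) μ := by
    rw [Module.End.hasEigenvalue_iff_mem_spectrum, AlgEquiv.spectrum_eq]
    exact hμ
  set E := Module.End.eigenspace (Matrix.toLinAlgEquiv' B) μ with hE
  have hEbot : E ≠ ⊥ := hμ'
  haveI : Nontrivial E := Submodule.nontrivial_iff_ne_bot.mpr hEbot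
  have hinv : ∀ v ∈ E, (Matrix.toLinAlgEquiv' A) v ∈ E := by
    intro v hv
    rw [hE, Module.End.mem_eigenspace_iff] at hv ⊢
    rw [Matrix.toLinAlgEquiv'_apply] at hv ⊢
    rw [Matrix.toLinAlgEquiv'_apply, Matrix.mulVec_mulVec, ← hcomm, ← Matrix.mulVec_mulVec, hv,
      Matrix.mulVec_smul]
  let g : E →ₗ[ℂ] E := (Matrix.toLinAlgEquiv' A).restrict hinv
  obtain ⟨l, hl⟩ := Module.End.exists_eigenvalue g
  obtain ⟨w, hw⟩ := hl.exists_hasEigenvector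
  have hw0 : (w : Fin n → ℂ) ≠ 0 := by
    simpa [Submodule.coe_eq_zero] using hw.right
  have hgw : A *ᵥ (w : Fin n → ℂ) = l • (w : Fin n → ℂ) := by
    have := congrArg (Subtype.val) hw.apply_eq_smul
    simpa [g, LinearMap.restrict_apply, Matrix.toLinAlgEquiv'_apply] using this
  have hlA : l ∈ spectrum ℂ A := by
    rw [← AlgEquiv.spectrum_eq (Matrix.toLinAlgEquiv' (R := ℂ) (n := Fin n)) A,
      ← Module.End.hasEigenvalue_iff_mem_spectrum]
    exact Module.End.hasEigenvalue_of_hasEigenvector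
      ⟨Module.End.mem_eigenspace_iff.mpr (by rw [Matrix.toLinAlgEquiv'_apply]; exact hgw), hw0⟩
  refine ⟨l, hlA, ?_⟩
  have h1 : B *ᵥ (w : Fin n → ℂ) = Complex.exp l • (w : Fin n → ℂ) := aux_mulVec_exp A hgw
  have h2 : B *ᵥ (w : Fin n → ℂ) = μ • (w : Fin n → ℂ) := by
    have hmem : (w : Fin n → ℂ) ∈ Module.End.eigenspace (Matrix.toLinAlgEquiv' B) μ := w.2
    rw [Module.End.mem_eigenspace_iff, Matrix.toLinAlgEquiv'_apply] at hmem
    exact hmem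
  have h3 : (μ - Complex.exp l) • (w : Fin n → ℂ) = 0 := by
    rw [sub_smul, ← h1, ← h2, sub_self]
  rcases smul_eq_zero.mp h3 with h | h
  · exact (sub_eq_zero.mp h).symm ▸ rfl
  · exact absurd h hw0

lemma aux_pow_bound {n : ℕ} (hn : 0 < n) (A : Matrix (Fin n) (Fin n) ℂ)
    (hA : ∀ μ ∈ spectrum ℂ A, μ.re < 0) :
    ∃ C : ℝ, 0 ≤ C ∧ ∀ k : ℕ, ‖(NormedSpace.exp A) ^ k‖ ≤ C := by
  haveI : Nonempty (Fin n) := Fin.pos_iff_nonempty.mp hn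
  set B := NormedSpace.exp A with hB
  have hSfin : (spectrum ℂ A).Finite := A.finite_spectrum
  have hSne : (spectrum ℂ A).Nonempty := spectrum.nonempty A
  have hFne : hSfin.toFinset.Nonempty := by
    rwa [Set.Finite.toFinset_nonempty]
  set m : ℝ := hSfin.toFinset.sup' hFne Complex.re with hm
  have hm0 : m < 0 := by
    rw [hm, Finset.sup'_lt_iff]
    intro l hl
    exact hA l (hSfin.mem_toFinset.mp hl)
  have hle : ∀ l ∈ spectrum ℂ A, l.re ≤ m :=
    fun l hl => Finset.le_sup' Complex.re (hSfin.mem_toFinset.mpr hl)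
  have hρ : spectralRadius ℂ B ≤ ENNReal.ofReal (Real.exp m) := by
    rw [spectralRadius]
    refine iSup₂_le fun μ hμ => ?_
    obtain ⟨l, hlA, rfl⟩ := aux_spec_exp A hμ
    rw [← enorm_eq_nnnorm, ← ofReal_norm]
    refine ENNReal.ofReal_le_ofReal ?_
    rw [Complex.norm_exp]
    exact Real.exp_le_exp.mpr (hle l hlA)
  have hρ1 : spectralRadius ℂ B < 1 :=
    lt_of_le_of_lt hρ (by rw [ENNReal.ofReal_lt_one]; exact Real.exp_lt_one_iff.mpr hm0)
  have hG := spectrum.pow_nnnorm_pow_one_div_tendsto_nhds_spectralRadius B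
  have hev : ∀ᶠ k : ℕ in Filter.atTop, ((‖B ^ k‖₊ : ENNReal) ^ (1 / (k : ℝ))) < 1 :=
    hG.eventually_lt_const hρ1
  obtain ⟨N, hN⟩ := Filter.eventually_atTop.mp (hev.and (Filter.eventually_ge_atTop 1))
  have hbig : ∀ k ≥ N, ‖B ^ k‖ ≤ 1 := by
    intro k hk
    obtain ⟨h1, h2⟩ := hN k hk
    by_contra hcon
    push_neg at hcon
    have h1le : (1 : ENNReal) ≤ (‖B ^ k‖₊ : ENNReal) := by
      rw [← ENNReal.ofReal_one, ← enorm_eq_nnnorm, ← ofReal_norm]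
      exact ENNReal.ofReal_le_ofReal hcon.le
    have : (1 : ENNReal) ≤ (‖B ^ k‖₊ : ENNReal) ^ (1 / (k : ℝ)) := by
      calc (1 : ENNReal) = 1 ^ (1 / (k : ℝ)) := (ENNReal.one_rpow _).symm
        _ ≤ _ := ENNReal.rpow_le_rpow h1le (by positivity)
    exact absurd h1 (not_lt.mpr this)
  refine ⟨1 + ∑ j ∈ Finset.range N, ‖B ^ j‖, by positivity, fun k => ?_⟩
  rcases lt_or_ge k N with hk | hk
  · have h1 : ‖B ^ k‖ ≤ ∑ j ∈ Finset.range N, ‖B ^ j‖ :=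
      Finset.single_le_sum (fun i _ => norm_nonneg _) (Finset.mem_range.mpr hk)
    linarith
  · have h1 := hbig k hk
    have h2 : (0:ℝ) ≤ ∑ j ∈ Finset.range N, ‖B ^ j‖ :=
      Finset.sum_nonneg fun i _ => norm_nonneg _
    linarith

/-- If all eigenvalues of an `n×n` complex matrix `A` have strictly negative real part,
then `sup_{t ≥ 0} ‖exp(tA)‖ < ∞`: there is `C ≥ 0` with `‖exp(tA)‖ ≤ C` for all `t ≥ 0`
(here `‖·‖` is the operator norm induced by the Euclidean norm). -/
theorem stmt8 {n : ℕ} (A : Matrix (Fin n) (Fin n) ℂ)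
    (hA : ∀ μ ∈ spectrum ℂ A, μ.re < 0) :
    ∃ C : ℝ, 0 ≤ C ∧ ∀ t : ℝ, 0 ≤ t → ‖NormedSpace.exp ((t : ℂ) • A)‖ ≤ C := by
  rcases Nat.eq_zero_or_pos n with h0 | hn
  · subst h0
    haveI : Subsingleton (Matrix (Fin 0) (Fin 0) ℂ) := ⟨fun a b => by ext i j; exact i.elim0⟩
    refine ⟨1, zero_le_one, fun t ht => ?_⟩
    rw [Subsingleton.elim (NormedSpace.exp ((t : ℂ) • A)) 0, norm_zero]
    exact zero_le_one
  · obtain ⟨C₀, hC₀, hCk⟩ := aux_pow_bound hn A hA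
    letI : NormedAlgebra ℚ (Matrix (Fin n) (Fin n) ℂ) := NormedAlgebra.restrictScalars ℚ ℂ _
    have hcont : Continuous fun s : ℝ => NormedSpace.exp ((s : ℂ) • A) :=
      NormedSpace.exp_continuous.comp (Complex.continuous_ofReal.smul continuous_const)
    obtain ⟨M, hM⟩ :=
      (isCompact_Icc (a := (0:ℝ)) (b := 1)).exists_bound_of_continuousOn hcont.continuousOn
    have hM0 : 0 ≤ M := le_trans (norm_nonneg _) (hM 0 ⟨le_refl _, zero_le_one⟩)
    refine ⟨M * C₀, mul_nonneg hM0 hC₀, fun t ht => ?_⟩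
    set k : ℕ := ⌊t⌋₊ with hk
    set s : ℝ := t - k with hs
    have hs0 : 0 ≤ s := sub_nonneg.mpr (Nat.floor_le ht)
    have hs1 : s ≤ 1 := by
      have := Nat.lt_floor_add_one t
      rw [hs]; linarith
    have hsplit : (t : ℂ) • A = (s : ℂ) • A + ((k : ℕ) : ℂ) • A := by
      rw [← add_smul]
      congr 1
      have : s + (k : ℝ) = t := by rw [hs]; ring
      calc (t : ℂ) = ((s + (k : ℝ) : ℝ) : ℂ) := by rw [this]
        _ = (s : ℂ) + ((k : ℕ) : ℂ) := by push_cast; ring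
    have hcomm : Commute ((s : ℂ) • A) (((k : ℕ) : ℂ) • A) :=
      ((Commute.refl A).smul_left _).smul_right _
    have hexp : NormedSpace.exp ((t : ℂ) • A)
        = NormedSpace.exp ((s : ℂ) • A) * (NormedSpace.exp A) ^ k := by
      rw [hsplit, NormedSpace.exp_add_of_commute hcomm]
      congr 1
      rw [show ((k : ℕ) : ℂ) • A = k • A from Nat.cast_smul_eq_nsmul ℂ k A,
        NormedSpace.exp_nsmul]
    rw [hexp]
    calc ‖NormedSpace.exp ((s : ℂ) • A) * (NormedSpace.exp A) ^ k‖
        ≤ ‖NormedSpace.exp ((s : ℂ) • A)‖ * ‖(NormedSpace.exp A) ^ k‖ := norm_mul_le _ _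
      _ ≤ M * C₀ := by
          refine mul_le_mul (hM s ⟨hs0, hs1⟩) (hCk k) (norm_nonneg _) hM0
end
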